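/- The half-kink q(x) = (1 - x⁴)/(1 + x⁴) satisfies the Bogomolnyi equation (1/2)q'(x) + (1/x)(1 - q(x)²) = 0 for x ∈ (0,1], together with q(0) = 1 and q(1) = 0, and its energy is E[q] = ∫₀¹ ((1/4)q'² + (1/x²)(1 - q²)²) x dx = 2/3. -/

import Mathlib

lemma halfKink_denom_pos (x : ℝ) : 0 < 1 + x ^ 4 := by positivity

lemma halfKink_hasDeriv (x : ℝ) :
    HasDerivAt (fun x : ℝ => (1 - x ^ 4) / (1 + x ^ 4))
      (-8 * x ^ 3 / (1 + x ^ 4) ^ 2) x := by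
  have h4 : HasDerivAt (fun x : ℝ => x ^ 4) (4 * x ^ 3) x := by
    simpa using hasDerivAt_pow 4 x
  have hnum : HasDerivAt (fun x : ℝ => 1 - x ^ 4) (-(4 * x ^ 3)) x := by
    simpa using h4.const_sub 1
  have hden : HasDerivAt (fun x : ℝ => 1 + x ^ 4) (4 * x ^ 3) x := by
    simpa using h4.const_add 1
  have := hnum.div hden (ne_of_gt (halfKink_denom_pos x))
  refine this.congr_deriv ?_
  field_simp
  ring

lemma halfKink_deriv (x : ℝ) :
    deriv (fun x : ℝ => (1 - x ^ 4) / (1 + x ^ 4)) x = -8 * x ^ 3 / (1 + x ^ 4) ^ 2 :=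
  (halfKink_hasDeriv x).deriv

theorem halfKink_bogomolnyi :
    let q : ℝ → ℝ := fun x => (1 - x ^ 4) / (1 + x ^ 4)
    (∀ x ∈ Set.Ioc (0:ℝ) 1, (1/2) * deriv q x + (1 - q x ^ 2) / x = 0) ∧
    q 0 = 1 ∧ q 1 = 0 ∧
    (∫ x in (0:ℝ)..1, ((1/4) * deriv q x ^ 2 + (1 - q x ^ 2) ^ 2 / x ^ 2) * x) = 2 / 3 := by
  intro q
  refine ⟨?_, by norm_num [q], by norm_num [q], ?_⟩
  · intro x hx
    have hx0 : x ≠ 0 := ne_of_gt hx.1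
    have hD := ne_of_gt (halfKink_denom_pos x)
    rw [halfKink_deriv]
    show (1/2) * (-8 * x ^ 3 / (1 + x ^ 4) ^ 2)
        + (1 - ((1 - x ^ 4) / (1 + x ^ 4)) ^ 2) / x = 0
    field_simp
    ring
  · -- rewrite the integrand
    have hcong : Set.EqOn
        (fun x => ((1/4) * deriv q x ^ 2 + (1 - q x ^ 2) ^ 2 / x ^ 2) * x)
        (fun x => 32 * x ^ 7 / (1 + x ^ 4) ^ 4) (Set.uIcc (0:ℝ) 1) := by
      intro x _
      have hD := ne_of_gt (halfKink_denom_pos x)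
      show ((1/4) * deriv q x ^ 2 + (1 - q x ^ 2) ^ 2 / x ^ 2) * x
          = 32 * x ^ 7 / (1 + x ^ 4) ^ 4
      rw [show deriv q x = -8 * x ^ 3 / (1 + x ^ 4) ^ 2 from halfKink_deriv x]
      rcases eq_or_ne x 0 with rfl | hx0
      · norm_num
      · show ((1/4) * (-8 * x ^ 3 / (1 + x ^ 4) ^ 2) ^ 2
            + (1 - ((1 - x ^ 4) / (1 + x ^ 4)) ^ 2) ^ 2 / x ^ 2) * x
            = 32 * x ^ 7 / (1 + x ^ 4) ^ 4
        field_simp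
        ring
    rw [intervalIntegral.integral_congr hcong]
    have hF : ∀ x ∈ Set.uIcc (0:ℝ) 1,
        HasDerivAt (fun x : ℝ => -4 * ((1 + x ^ 4) ^ 2)⁻¹ + (8/3) * ((1 + x ^ 4) ^ 3)⁻¹)
          (32 * x ^ 7 / (1 + x ^ 4) ^ 4) x := by
      intro x _
      have hD := halfKink_denom_pos x
      have hden : HasDerivAt (fun x : ℝ => 1 + x ^ 4) (4 * x ^ 3) x := by
        simpa using (hasDerivAt_pow 4 x).const_add 1
      have h2 : HasDerivAt (fun x : ℝ => ((1 + x ^ 4) ^ 2)⁻¹)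
          (-(2 * (1 + x ^ 4) * (4 * x ^ 3)) / ((1 + x ^ 4) ^ 2) ^ 2) x := by
        have := (hden.fun_pow 2).fun_inv (pow_ne_zero 2 (ne_of_gt hD))
        refine this.congr_deriv ?_
        norm_num
      have h3 : HasDerivAt (fun x : ℝ => ((1 + x ^ 4) ^ 3)⁻¹)
          (-(3 * (1 + x ^ 4) ^ 2 * (4 * x ^ 3)) / ((1 + x ^ 4) ^ 3) ^ 2) x := by
        have := (hden.fun_pow 3).fun_inv (pow_ne_zero 3 (ne_of_gt hD))
        refine this.congr_deriv ?_
        norm_num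
      have := (h2.const_mul (-4 : ℝ)).add (h3.const_mul ((8:ℝ)/3))
      refine this.congr_deriv ?_
      have hDne := ne_of_gt hD
      field_simp
      ring
    have hint : IntervalIntegrable (fun x : ℝ => 32 * x ^ 7 / (1 + x ^ 4) ^ 4)
        MeasureTheory.volume 0 1 := by
      apply Continuous.intervalIntegrable
      have : ∀ x : ℝ, (1 + x ^ 4) ^ 4 ≠ 0 := fun x =>
        pow_ne_zero 4 (ne_of_gt (halfKink_denom_pos x))
      exact (continuous_const.mul (continuous_pow 7)).div
        ((continuous_const.add (continuous_pow 4)).pow 4) this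
    rw [intervalIntegral.integral_eq_sub_of_hasDerivAt hF hint]
    norm_num
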